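/- Let (T_t)_{t ≥ 0} be a diskcyclic strongly continuous semigroup of operators on an infinite-dimensional complex Banach space X, and let x ∈ X be a diskcyclic vector for (T_t)_{t ≥ 0}. Then: (1) T_t x ≠ 0 for all t ≥ 0; and (2) for every s ≥ 0, the set {α T_t x : t ≥ s, α ∈ 𝔻} is dense in X. -/

import Mathlib

open scoped NNReal

/-- In an infinite-dimensional normed space, compact sets have empty interior. -/
lemma aux_compact_interior_empty {X : Type*} [NormedAddCommGroup X] [NormedSpace ℂ X]
    (hinf : ¬ FiniteDimensional ℂ X) {K : Set X} (hK : IsCompact K) :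
    interior K = ∅ := by
  by_contra h
  obtain ⟨y, hy⟩ := Set.nonempty_iff_ne_empty.2 h
  obtain ⟨r, hr, hball⟩ := Metric.isOpen_iff.1 isOpen_interior y hy
  have hsub : Metric.closedBall y (r / 2) ⊆ K := by
    refine (Metric.closedBall_subset_ball ?_).trans (hball.trans interior_subset)
    linarith
  have hcomp : IsCompact (Metric.closedBall y (r / 2)) :=
    hK.of_isClosed_subset Metric.isClosed_closedBall hsub
  exact hinf (FiniteDimensional.of_isCompact_closedBall ℂ (by linarith) hcomp)

theorem stmt_13 {X : Type*} [NormedAddCommGroup X] [NormedSpace ℂ X] [CompleteSpace X]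
    (hinf : ¬ FiniteDimensional ℂ X)
    (T : ℝ≥0 → X →L[ℂ] X)
    (hT0 : T 0 = ContinuousLinearMap.id ℂ X)
    (hTadd : ∀ t s : ℝ≥0, T (t + s) = T t ∘L T s)
    (hTcont : ∀ x : X, Continuous fun t : ℝ≥0 => T t x)
    (x : X) (hx : Dense {y : X | ∃ α : ℂ, ‖α‖ ≤ 1 ∧ ∃ t : ℝ≥0, y = α • T t x}) :
    (∀ t : ℝ≥0, T t x ≠ 0) ∧
    ∀ s : ℝ≥0, Dense {y : X | ∃ α : ℂ, ‖α‖ ≤ 1 ∧ ∃ t : ℝ≥0, s ≤ t ∧ y = α • T t x} := by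
  -- the compact "initial segment" of the disk orbit
  have hKcomp : ∀ s : ℝ≥0,
      IsCompact {y : X | ∃ α : ℂ, ‖α‖ ≤ 1 ∧ ∃ t : ℝ≥0, t ≤ s ∧ y = α • T t x} := by
    intro s
    have : {y : X | ∃ α : ℂ, ‖α‖ ≤ 1 ∧ ∃ t : ℝ≥0, t ≤ s ∧ y = α • T t x} =
        (fun p : ℂ × ℝ≥0 => p.1 • T p.2 x) '' (Metric.closedBall 0 1 ×ˢ Set.Icc 0 s) := by
      ext y
      simp only [Set.mem_image, Set.mem_prod, Metric.mem_closedBall, dist_zero_right,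
        Set.mem_Icc, Set.mem_setOf_eq, Prod.exists]
      constructor
      · rintro ⟨α, hα, t, ht, rfl⟩
        exact ⟨α, t, ⟨hα, zero_le, ht⟩, rfl⟩
      · rintro ⟨α, t, ⟨hα, _, ht⟩, rfl⟩
        exact ⟨α, hα, t, ht, rfl⟩
    rw [this]
    refine ((isCompact_closedBall 0 1).prod isCompact_Icc).image ?_
    exact continuous_fst.smul ((hTcont x).comp continuous_snd)
  constructor
  · -- part 1
    intro t₀ ht₀
    have hzero : ∀ t : ℝ≥0, t₀ ≤ t → T t x = 0 := by
      intro t ht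
      have : T t = T (t - t₀) ∘L T t₀ := by
        rw [← hTadd, tsub_add_cancel_of_le ht]
      rw [this]
      simp [ht₀]
    set K := {y : X | ∃ α : ℂ, ‖α‖ ≤ 1 ∧ ∃ t : ℝ≥0, t ≤ t₀ ∧ y = α • T t x} with hKdef
    have hsub : {y : X | ∃ α : ℂ, ‖α‖ ≤ 1 ∧ ∃ t : ℝ≥0, y = α • T t x} ⊆ K := by
      rintro y ⟨α, hα, t, rfl⟩
      rcases le_total t t₀ with h | h
      · exact ⟨α, hα, t, h, rfl⟩
      · exact ⟨0, by simp, 0, zero_le, by simp [hzero t h]⟩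
    have hKuniv : K = Set.univ := by
      have hd : Dense K := hx.mono hsub
      exact (hKcomp t₀).isClosed.closure_eq.symm.trans hd.closure_eq
    have := aux_compact_interior_empty hinf (hKcomp t₀)
    rw [← hKdef, hKuniv, interior_univ] at this
    exact (Set.univ_nonempty.ne_empty) this
  · -- part 2
    intro s
    set K := {y : X | ∃ α : ℂ, ‖α‖ ≤ 1 ∧ ∃ t : ℝ≥0, t ≤ s ∧ y = α • T t x} with hKdef
    set D := {y : X | ∃ α : ℂ, ‖α‖ ≤ 1 ∧ ∃ t : ℝ≥0, s ≤ t ∧ y = α • T t x} with hDdef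
    have hsplit : {y : X | ∃ α : ℂ, ‖α‖ ≤ 1 ∧ ∃ t : ℝ≥0, y = α • T t x} ⊆ K ∪ D := by
      rintro y ⟨α, hα, t, rfl⟩
      rcases le_total t s with h | h
      · exact Or.inl ⟨α, hα, t, h, rfl⟩
      · exact Or.inr ⟨α, hα, t, h, rfl⟩
    have hKc : IsCompact K := hKcomp s
    have hdenseC : Dense Kᶜ := by
      rw [← interior_eq_empty_iff_dense_compl]
      exact aux_compact_interior_empty hinf hKc
    have hsubC : Kᶜ ⊆ closure D := by
      intro y hy
      have hyU : y ∈ closure (K ∪ D) := (hx.mono hsplit) y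
      rw [closure_union, hKc.isClosed.closure_eq] at hyU
      rcases hyU with h | h
      · exact absurd h hy
      · exact h
    intro y
    exact closure_minimal hsubC isClosed_closure (hdenseC y)
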